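/- A subset F of ℕ is a C-set if and only if there exist a dynamical system (X,T), points x, y ∈ X such that (i) for every open neighborhood V of y the set N(y,V) = {n ∈ ℕ : T^n y ∈ V} is a J-set, and (ii) (y,y) lies in the ω-limit set of (x,y) under T×T (i.e., for every open set W ∋ (y,y) and every m ∈ ℕ there exists n ≥ m with (T×T)^n(x,y) ∈ W), together with an open neighborhood U of y such that F = N(x,U) = {n ∈ ℕ : T^n x ∈ U}. -/

import Mathlib

open Finset

/-- `F ⊆ ℕ₊` is a J-set: for every `m ∈ ℕ` and every sequence `s : ℕ₊ → ℤ^m`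
there exist `r ∈ ℕ₊` and a nonempty finite `α ⊆ ℕ₊` such that
`r + s_α i ∈ F` for every `i ∈ {1,…,m}`, where `s_α = ∑_{n∈α} s n`. -/
def IsJSet (F : Set ℕ+) : Prop :=
  ∀ (m : ℕ) (s : ℕ+ → Fin m → ℤ),
    ∃ (r : ℕ+) (α : Finset ℕ+), α.Nonempty ∧
      ∀ i : Fin m, ∃ k ∈ F, ((k : ℕ) : ℤ) = ((r : ℕ) : ℤ) + ∑ n ∈ α, s n i

/-- An ultrafilter `p` on `ℕ₊` is idempotent: `p + p = p`, where
`A ∈ p + q ↔ {n | {m | n + m ∈ A} ∈ q} ∈ p`. -/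
def IsIdempotentUF (p : Ultrafilter ℕ+) : Prop :=
  ∀ A : Set ℕ+, ({n : ℕ+ | {m : ℕ+ | n + m ∈ A} ∈ p} ∈ p ↔ A ∈ p)

/-- `F ⊆ ℕ₊` is a C-set: there is an idempotent ultrafilter `p` on `ℕ₊` such that
`F ∈ p` and every member of `p` is a J-set. -/
def IsCSet (F : Set ℕ+) : Prop :=
  ∃ p : Ultrafilter ℕ+, IsIdempotentUF p ∧ (∀ A ∈ p, IsJSet A) ∧ F ∈ p

theorem isJSet_iff_fintype {F : Set ℕ+} :
    IsJSet F ↔ ∀ (ι : Type) [Fintype ι] (s : ℕ+ → ι → ℤ),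
      ∃ (r : ℕ+) (α : Finset ℕ+), α.Nonempty ∧
        ∀ i : ι, ∃ k ∈ F, ((k : ℕ) : ℤ) = ((r : ℕ) : ℤ) + ∑ n ∈ α, s n i := by
  constructor
  · intro h ι _ s
    obtain ⟨r, α, hα, hr⟩ := h (Fintype.card ι) (fun n j => s n ((Fintype.equivFin ι).symm j))
    refine ⟨r, α, hα, fun i => ?_⟩
    simpa using hr (Fintype.equivFin ι i)
  · intro h m s
    exact h (Fin m) s

theorem isJSet_union_elim {C A B : Set ℕ+} (hC : IsJSet C) (hsub : C ⊆ A ∪ B)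
    (hB : ¬ IsJSet B) : IsJSet A := by
  classical
  rw [IsJSet] at hB; push_neg at hB
  obtain ⟨b, v, hv⟩ := hB
  set v' : ℕ+ → Option (Fin b) → ℤ := fun n j => j.elim 0 (v n) with hv'
  have PB : ∀ (R : ℤ) (γ : Finset ℕ+), γ.Nonempty →
      ∃ j : Option (Fin b), ∀ k ∈ B, ((k:ℕ):ℤ) ≠ R + ∑ n ∈ γ, v' n j := by
    intro R γ hγ
    by_cases h0 : ∃ k ∈ B, ((k:ℕ):ℤ) = R + ∑ n ∈ γ, v' n none
    · obtain ⟨k0, hk0B, hk0⟩ := h0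
      have hR : R = ((k0:ℕ):ℤ) := by
        have : ∑ n ∈ γ, v' n none = 0 := by simp [hv']
        rw [this, add_zero] at hk0; omega
      obtain ⟨j, hj⟩ := hv k0 γ hγ
      refine ⟨some j, fun k hk => ?_⟩
      have := hj k hk
      simpa [hv', hR] using this
    · push_neg at h0
      exact ⟨none, h0⟩
  intro m s
  set s' : ℕ+ → Option (Fin m) → ℤ := fun n i => i.elim 0 (s n) with hs'
  obtain ⟨ι, ιft, hHJ⟩ :=
    Combinatorics.Line.exists_mono_in_high_dimension (Option (Fin b)) (Option (Fin m) → Bool)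
  letI := ιft
  set N := Fintype.card ι with hNdef
  set e : ι ≃ Fin N := Fintype.equivFin ι with he
  set φ : ι → ℕ+ → ℕ+ := fun ℓ n =>
    ⟨N * n + (e ℓ : ℕ), Nat.add_pos_left (Nat.mul_pos (Fin.pos (e ℓ)) n.pos) _⟩ with hφ
  have hφinj : ∀ ℓ, Function.Injective (φ ℓ) := by
    intro ℓ n1 n2 h
    have h' : N * (n1:ℕ) + (e ℓ : ℕ) = N * (n2:ℕ) + (e ℓ : ℕ) := congrArg (fun q : ℕ+ => (q:ℕ)) h
    have : (n1:ℕ) = (n2:ℕ) :=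
      Nat.eq_of_mul_eq_mul_left (Fin.pos (e ℓ)) (by omega)
    exact PNat.coe_injective this
  have hφdisj : ∀ ℓ1 ℓ2 n1 n2, φ ℓ1 n1 = φ ℓ2 n2 → ℓ1 = ℓ2 := by
    intro ℓ1 ℓ2 n1 n2 h
    have h' : N * (n1:ℕ) + (e ℓ1 : ℕ) = N * (n2:ℕ) + (e ℓ2 : ℕ) := congrArg (fun q : ℕ+ => (q:ℕ)) h
    have h1 : (N * (n1:ℕ) + (e ℓ1 : ℕ)) % N = (e ℓ1 : ℕ) % N := by
      simp [Nat.mul_add_mod]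
    have h2 : (N * (n2:ℕ) + (e ℓ2 : ℕ)) % N = (e ℓ2 : ℕ) % N := by
      simp [Nat.mul_add_mod]
    have : (e ℓ1 : ℕ) % N = (e ℓ2 : ℕ) % N := by rw [← h1, ← h2, h']
    rw [Nat.mod_eq_of_lt (e ℓ1).isLt, Nat.mod_eq_of_lt (e ℓ2).isLt] at this
    exact e.injective (Fin.ext this)
  set t : ℕ+ → (Option (Fin m)) × (ι → Option (Fin b)) → ℤ :=
    fun n c => s' n c.1 + ∑ ℓ : ι, v' (φ ℓ n) (c.2 ℓ) with ht
  obtain ⟨r, α, hα, hTC⟩ := isJSet_iff_fintype.mp hC ((Option (Fin m)) × (ι → Option (Fin b))) t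
  have hsum : ∀ (i : Option (Fin m)) (f : ι → Option (Fin b)),
      ∑ n ∈ α, t n (i, f)
        = (∑ n ∈ α, s' n i) + ∑ ℓ : ι, ∑ q ∈ α.image (φ ℓ), v' q (f ℓ) := by
    intro i f
    rw [ht]
    rw [Finset.sum_add_distrib]
    congr 1
    rw [Finset.sum_comm]
    refine Finset.sum_congr rfl fun ℓ _ => ?_
    rw [Finset.sum_image (fun a _ c _ hac => hφinj ℓ hac)]
  set χ : (ι → Option (Fin b)) → (Option (Fin m) → Bool) :=
    fun f i => decide (∃ k ∈ A, ((k:ℕ):ℤ) = ((r:ℕ):ℤ) + ∑ n ∈ α, t n (i, f)) with hχ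
  obtain ⟨l, c, hc⟩ := hHJ χ
  set I : Finset ι := univ.filter (fun ℓ => l.idxFun ℓ = none) with hI
  set Γ : Finset ℕ+ := I.biUnion (fun ℓ => α.image (φ ℓ)) with hΓ
  have hΓne : Γ.Nonempty := by
    obtain ⟨ℓ0, hℓ0⟩ := l.proper
    obtain ⟨n0, hn0⟩ := hα
    exact ⟨φ ℓ0 n0, Finset.mem_biUnion.mpr ⟨ℓ0, by simp [hI, hℓ0],
      Finset.mem_image.mpr ⟨n0, hn0, rfl⟩⟩⟩
  have hΓsum : ∀ a : Option (Fin b),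
      ∑ q ∈ Γ, v' q a = ∑ ℓ ∈ I, ∑ q ∈ α.image (φ ℓ), v' q a := by
    intro a
    refine Finset.sum_biUnion ?_
    intro ℓ1 h1 ℓ2 h2 h12
    simp only [Finset.disjoint_left]
    intro q hq1 hq2
    obtain ⟨n1, _, rfl⟩ := Finset.mem_image.mp hq1
    obtain ⟨n2, _, he2⟩ := Finset.mem_image.mp hq2
    exact h12 (hφdisj ℓ1 ℓ2 n1 n2 he2.symm)
  set R : Option (Fin m) → ℤ := fun i =>
    ((r:ℕ):ℤ) + ∑ n ∈ α, s' n i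
      + ∑ ℓ ∈ univ.filter (fun ℓ => ¬ l.idxFun ℓ = none),
          ∑ q ∈ α.image (φ ℓ), v' q (l none ℓ) with hR
  have hdec : ∀ (a : Option (Fin b)) (i : Option (Fin m)),
      ((r:ℕ):ℤ) + ∑ n ∈ α, t n (i, l a) = R i + ∑ q ∈ Γ, v' q a := by
    intro a i
    rw [hsum, hΓsum a, hR]
    have hsplit := Finset.sum_filter_add_sum_filter_not (univ : Finset ι)
      (fun ℓ => l.idxFun ℓ = none)
      (fun ℓ => ∑ q ∈ α.image (φ ℓ), v' q (l a ℓ))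
    rw [← hsplit]
    have e1 : ∑ ℓ ∈ I, ∑ q ∈ α.image (φ ℓ), v' q (l a ℓ)
        = ∑ ℓ ∈ I, ∑ q ∈ α.image (φ ℓ), v' q a := by
      refine Finset.sum_congr rfl fun ℓ hℓ => ?_
      have : l.idxFun ℓ = none := (Finset.mem_filter.mp hℓ).2
      simp [Combinatorics.Line.coe_apply, this]
    have e2 : ∑ ℓ ∈ univ.filter (fun ℓ => ¬ l.idxFun ℓ = none),
          ∑ q ∈ α.image (φ ℓ), v' q (l a ℓ)
        = ∑ ℓ ∈ univ.filter (fun ℓ => ¬ l.idxFun ℓ = none),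
          ∑ q ∈ α.image (φ ℓ), v' q (l none ℓ) := by
      refine Finset.sum_congr rfl fun ℓ hℓ => ?_
      have h2 : ¬ l.idxFun ℓ = none := (Finset.mem_filter.mp hℓ).2
      obtain ⟨w, hw⟩ := Option.ne_none_iff_exists'.mp h2
      simp [Combinatorics.Line.coe_apply, hw]
    rw [e1, e2]
    ring
  have hAline : ∀ i, χ (l none) i = true := by
    intro i
    obtain ⟨a, ha⟩ := PB (R i) Γ hΓne
    obtain ⟨k, hkC, hke⟩ := hTC (i, l a)
    have hkA : k ∈ A := by
      rcases hsub hkC with h | h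
      · exact h
      · exact absurd (by rw [hke]; exact hdec a i) (ha k h)
    have hstep : χ (l a) i = true := by
      rw [hχ]
      exact decide_eq_true ⟨k, hkA, hke⟩
    have heq : χ (l none) = χ (l a) := (hc none).trans (hc a).symm
    rw [heq]
    exact hstep
  have hAin : ∀ i, ∃ k ∈ A, ((k:ℕ):ℤ) = ((r:ℕ):ℤ) + ∑ n ∈ α, t n (i, l none) := by
    intro i
    have := hAline i
    rw [hχ] at this
    exact of_decide_eq_true this
  obtain ⟨k0, hk0A, hk0⟩ := hAin none
  refine ⟨k0, α, hα, fun i0 => ?_⟩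
  obtain ⟨k1, hk1A, hk1⟩ := hAin (some i0)
  refine ⟨k1, hk1A, ?_⟩
  have hdiff : ∑ n ∈ α, t n (some i0, l none)
      = ∑ n ∈ α, t n (none, l none) + ∑ n ∈ α, s n i0 := by
    rw [hsum, hsum]
    simp only [hs', Option.elim]
    simp
    ring
  rw [hk1, hdiff, ← add_assoc, ← hk0]

theorem isJSet_mono {A B : Set ℕ+} (h : IsJSet A) (hAB : A ⊆ B) : IsJSet B := by
  intro m s
  obtain ⟨r, α, hα, hr⟩ := h m s
  exact ⟨r, α, hα, fun i => by obtain ⟨k, hk, he⟩ := hr i; exact ⟨k, hAB hk, he⟩⟩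

theorem isJSet_univ : IsJSet (Set.univ : Set ℕ+) := by
  intro m s
  refine ⟨⟨(∑ i, (s 1 i).natAbs) + 1, Nat.succ_pos _⟩, {1}, ⟨1, Finset.mem_singleton_self 1⟩,
    fun i => ?_⟩
  have hb : (s 1 i).natAbs ≤ ∑ j, (s 1 j).natAbs :=
    Finset.single_le_sum (f := fun j => (s 1 j).natAbs) (fun j _ => Nat.zero_le _)
      (Finset.mem_univ i)
  have hpos : (0:ℤ) < ((∑ j, (s 1 j).natAbs : ℕ) : ℤ) + 1 + s 1 i := by
    have h2 : ((s 1 i).natAbs : ℤ) ≤ ((∑ j, (s 1 j).natAbs : ℕ) : ℤ) := by exact_mod_cast hb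
    omega
  refine ⟨⟨(((∑ j, (s 1 j).natAbs : ℕ) : ℤ) + 1 + s 1 i).toNat, by omega⟩, trivial, ?_⟩
  simp only [Finset.sum_singleton, PNat.mk_coe]
  omega

theorem isJSet_sUnion {𝒯 : Set (Set ℕ+)} (h𝒯 : 𝒯.Finite) :
    ∀ D : Set ℕ+, IsJSet D → D ⊆ ⋃₀ 𝒯 → ∃ A ∈ 𝒯, IsJSet A := by
  classical
  refine Set.Finite.induction_on (motive := fun 𝒯 _ => ∀ D : Set ℕ+, IsJSet D → D ⊆ ⋃₀ 𝒯 → ∃ A ∈ 𝒯, IsJSet A) 𝒯 h𝒯 ?_ ?_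
  · intro D hD hsub
    obtain ⟨r, α, hα, hr⟩ := hD 1 (fun _ _ => 0)
    obtain ⟨k, hk, -⟩ := hr 0
    exact absurd (hsub hk) (by simp)
  · intro A 𝒮 _ _ ih D hD hsub
    by_cases hA : IsJSet A
    · exact ⟨A, Set.mem_insert _ _, hA⟩
    · have hsub' : D ⊆ A ∪ ⋃₀ 𝒮 := by
        intro d hd
        rcases hsub hd with ⟨S, hS, hdS⟩
        rcases Set.mem_insert_iff.mp hS with rfl | hS'
        · exact Or.inl hdS
        · exact Or.inr ⟨S, hS', hdS⟩
      have hJ : IsJSet (⋃₀ 𝒮) := by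
        refine isJSet_union_elim hD ?_ hA
        intro d hd; rcases hsub' hd with h | h
        · exact Or.inr h
        · exact Or.inl h
      obtain ⟨S, hS, hSJ⟩ := ih (⋃₀ 𝒮) hJ (le_refl _)
      exact ⟨S, Set.mem_insert_iff.mpr (Or.inr hS), hSJ⟩

/-- Existence of an ultrafilter all of whose members are J-sets, containing a given
collection whose finite intersections are all J-sets. -/
theorem exists_jset_ultrafilter {g : Set (Set ℕ+)}
    (hg : ∀ t : Finset (Set ℕ+), ↑t ⊆ g → IsJSet (⋂₀ ↑t)) :
    ∃ u : Ultrafilter ℕ+, (∀ A ∈ u, IsJSet A) ∧ ∀ D ∈ g, D ∈ u := by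
  classical
  set gen : Set (Set ℕ+) := g ∪ {S | ∃ A : Set ℕ+, ¬ IsJSet A ∧ S = Aᶜ} with hgen
  have hne : (Filter.generate gen).NeBot := by
    rw [Filter.generate_neBot_iff]
    intro t ht hfin
    by_contra hemp
    rw [Set.not_nonempty_iff_eq_empty] at hemp
    lift t to Finset (Set ℕ+) using hfin
    set t1 : Finset (Set ℕ+) := t.filter (· ∈ g) with ht1
    set t2 : Finset (Set ℕ+) := t.filter (· ∉ g) with ht2
    have hD : IsJSet (⋂₀ ↑t1) := hg t1 (by intro S hS; exact (Finset.mem_filter.mp hS).2)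
    have hDsub : (⋂₀ ↑t1) ⊆ ⋃₀ {A | ∃ S ∈ t2, S = Aᶜ} := by
      intro d hd
      by_contra hcon
      have hdt : d ∈ ⋂₀ (t : Set (Set ℕ+)) := by
        intro S hS
        by_cases hSg : S ∈ g
        · exact hd S (Finset.mem_coe.mpr (Finset.mem_filter.mpr ⟨hS, hSg⟩))
        · by_contra hdS
          refine hcon ⟨Sᶜ, ⟨S, Finset.mem_filter.mpr ⟨hS, hSg⟩, (compl_compl S).symm⟩, hdS⟩
      rw [hemp] at hdt; exact hdt
    have hfin2 : ({A | ∃ S ∈ t2, S = Aᶜ} : Set (Set ℕ+)).Finite := by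
      have : {A | ∃ S ∈ t2, S = Aᶜ} ⊆ compl '' ↑t2 := by
        rintro A ⟨S, hS, hSA⟩
        exact ⟨S, hS, by rw [hSA, compl_compl]⟩
      exact Set.Finite.subset (t2.finite_toSet.image _) this
    obtain ⟨A, hA, hAJ⟩ := isJSet_sUnion hfin2 _ hD hDsub
    obtain ⟨S, hS, hSA⟩ := hA
    have hSne : S ∉ g := (Finset.mem_filter.mp hS).2
    have hSt : S ∈ (t : Set (Set ℕ+)) := (Finset.mem_filter.mp hS).1
    rcases ht hSt with h | ⟨A', hA', hSA'⟩
    · exact hSne h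
    · have hAA : A = A' := compl_injective (hSA.symm.trans hSA')
      exact hA' (hAA ▸ hAJ)
  obtain ⟨u, hu⟩ := Filter.exists_ultrafilter_le (Filter.generate gen)
  refine ⟨u, ?_, ?_⟩
  · intro A hA
    by_contra hAJ
    have : Aᶜ ∈ u := hu (Filter.mem_generate_of_mem (Or.inr ⟨A, hAJ, rfl⟩))
    exact (Filter.empty_notMem (u : Filter ℕ+))
      (by simpa [Set.inter_compl_self] using Filter.inter_mem hA this)
  · intro D hD
    exact hu (Filter.mem_generate_of_mem (Or.inl hD))

attribute [local instance] Ultrafilter.add Ultrafilter.addSemigroup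

open Filter Topology

section Limits

variable {X : Type} [TopologicalSpace X] [CompactSpace X] [T2Space X]

theorem exists_ulim (u : Ultrafilter ℕ+) (g : ℕ+ → X) : ∃ a : X, Filter.Tendsto g ↑u (𝓝 a) := by
  obtain ⟨a, -, ha⟩ := (isCompact_univ (X := X)).ultrafilter_le_nhds (u.map g)
    (by simp [Filter.le_principal_iff])
  exact ⟨a, by rwa [Ultrafilter.coe_map] at ha⟩

noncomputable def ulim (u : Ultrafilter ℕ+) (g : ℕ+ → X) : X := (exists_ulim u g).choose

theorem ulim_spec (u : Ultrafilter ℕ+) (g : ℕ+ → X) : Filter.Tendsto g ↑u (𝓝 (ulim u g)) :=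
  (exists_ulim u g).choose_spec

theorem ulim_eq {u : Ultrafilter ℕ+} {g : ℕ+ → X} {a : X} (h : Filter.Tendsto g ↑u (𝓝 a)) :
    ulim u g = a :=
  tendsto_nhds_unique (ulim_spec u g) h

theorem mem_ulim {u : Ultrafilter ℕ+} {g : ℕ+ → X} {V : Set X} (hV : IsOpen V)
    (hm : ulim u g ∈ V) : {n : ℕ+ | g n ∈ V} ∈ u :=
  (ulim_spec u g) (hV.mem_nhds hm)

theorem ulim_add (T : X → X) (hT : Continuous T) (q r : Ultrafilter ℕ+) (z : X) :
    ulim (q + r) (fun n : ℕ+ => T^[(n:ℕ)] z)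
      = ulim q (fun n : ℕ+ => T^[(n:ℕ)] (ulim r (fun m : ℕ+ => T^[(m:ℕ)] z))) := by
  set w := ulim r (fun m : ℕ+ => T^[(m:ℕ)] z) with hw
  refine ulim_eq ?_
  rw [tendsto_nhds]
  intro V hV haV
  have hmem : {n : ℕ+ | T^[(n:ℕ)] w ∈ V} ∈ q := mem_ulim hV haV
  have hq : {n : ℕ+ | {m : ℕ+ | T^[((n + m : ℕ+):ℕ)] z ∈ V} ∈ r} ∈ q := by
    refine Filter.mem_of_superset hmem ?_
    intro n hn
    have hTn : Filter.Tendsto (fun m : ℕ+ => T^[(n:ℕ)] (T^[(m:ℕ)] z)) ↑r (𝓝 (T^[(n:ℕ)] w)) :=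
      ((hT.iterate (n:ℕ)).tendsto w).comp (ulim_spec r _)
    have hmemr := hTn (hV.mem_nhds hn)
    refine Filter.mem_of_superset hmemr ?_
    intro p hp
    simp only [Set.mem_preimage] at hp
    simp only [Set.mem_setOf_eq, PNat.add_coe]
    rwa [Function.iterate_add_apply]
  have := (Ultrafilter.eventually_add q r (fun k => T^[(k:ℕ)] z ∈ V)).mpr ?_
  · exact this
  · exact hq
end Limits

theorem jset_uf_add {p q : Ultrafilter ℕ+} (hp : ∀ A ∈ p, IsJSet A) :
    ∀ A ∈ p + q, IsJSet A := by
  intro A hA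
  have hB : {n : ℕ+ | {m : ℕ+ | n + m ∈ A} ∈ q} ∈ p :=
    (Ultrafilter.eventually_add p q (· ∈ A)).mp hA
  have hBJ := hp _ hB
  intro m s
  obtain ⟨r, α, hα, hr⟩ := hBJ m s
  choose k hkB hke using hr
  have hint : (⋂ i : Fin m, {m' : ℕ+ | k i + m' ∈ A}) ∈ (q : Filter ℕ+) :=
    Filter.iInter_mem.mpr (fun i => hkB i)
  obtain ⟨n0, hn0⟩ := Filter.nonempty_of_mem hint
  refine ⟨r + n0, α, hα, fun i => ?_⟩
  refine ⟨k i + n0, Set.mem_iInter.mp hn0 i, ?_⟩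
  have h1 := hke i
  have h2 : ((k i + n0 : ℕ+) : ℕ) = (k i : ℕ) + (n0 : ℕ) := PNat.add_coe _ _
  have h3 : ((r + n0 : ℕ+) : ℕ) = (r : ℕ) + (n0 : ℕ) := PNat.add_coe _ _
  rw [h2, h3]
  push_cast
  push_cast at h1
  linarith

theorem cset_forward (F : Set ℕ+) (h : IsCSet F) :
      ∃ (X : Type) (_ : TopologicalSpace X) (T : X → X) (x y : X) (U : Set X),
        Nonempty X ∧ CompactSpace X ∧ T2Space X ∧ Continuous T ∧
        (∀ V : Set X, IsOpen V → y ∈ V → IsJSet {n : ℕ+ | T^[(n : ℕ)] y ∈ V}) ∧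
        (∀ W : Set (X × X), IsOpen W → (y, y) ∈ W →
          ∀ m : ℕ+, ∃ n : ℕ+, m ≤ n ∧ (T^[(n : ℕ)] x, T^[(n : ℕ)] y) ∈ W) ∧
        IsOpen U ∧ y ∈ U ∧ F = {n : ℕ+ | T^[(n : ℕ)] x ∈ U} := by
  classical
  obtain ⟨p, hp, hJ, hF⟩ := h
  set T : (ℕ → Bool) → (ℕ → Bool) := fun z k => z (k + 1) with hT
  have hiter : ∀ (n : ℕ) (z : ℕ → Bool) (k : ℕ), T^[n] z k = z (k + n) := by
    intro n
    induction n with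
    | zero => intro z k; simp
    | succ n ih =>
        intro z k
        rw [Function.iterate_succ_apply, ih]
        show z (k + n + 1) = z (k + (n + 1))
        rw [Nat.add_assoc]
  set Gn : Set ℕ := {j | ∃ i ∈ F, (i : ℕ) = j} with hGn
  set xpt : ℕ → Bool := fun k => decide (k ∈ Gn) with hxpt
  set AA : ℕ → Set ℕ+ := fun k => {n : ℕ+ | (k + (n : ℕ)) ∈ Gn} with hAA
  set ypt : ℕ → Bool := fun k => decide (AA k ∈ p) with hypt
  have hA0 : AA 0 = F := by
    ext n
    simp only [hAA, Set.mem_setOf_eq, Nat.zero_add, hGn]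
    constructor
    · rintro ⟨i, hi, hin⟩
      rwa [PNat.coe_injective hin] at hi
    · intro hn; exact ⟨n, hn, rfl⟩
  have key1 : ∀ k : ℕ, {n : ℕ+ | xpt (k + (n : ℕ)) = ypt k} ∈ p := by
    intro k
    by_cases h : AA k ∈ p
    · refine Filter.mem_of_superset h ?_
      intro n hn
      have hn' : (k + (n:ℕ)) ∈ Gn := hn
      simp [hxpt, hypt, hn', h]
    · have hc : (AA k)ᶜ ∈ p := Ultrafilter.compl_mem_iff_notMem.mpr h
      refine Filter.mem_of_superset hc ?_
      intro n hn
      have hn' : ¬ (k + (n:ℕ)) ∈ Gn := hn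
      simp [hxpt, hypt, hn', h]
  have hAAshift : ∀ (k : ℕ) (n : ℕ+), {m : ℕ+ | n + m ∈ AA k} = AA (k + (n : ℕ)) := by
    intro k n
    ext m'
    simp only [hAA, Set.mem_setOf_eq, PNat.add_coe]
    rw [Nat.add_assoc]
  have key2 : ∀ k : ℕ, {n : ℕ+ | ypt (k + (n : ℕ)) = ypt k} ∈ p := by
    intro k
    have hsetEq : {n : ℕ+ | {m : ℕ+ | n + m ∈ AA k} ∈ p} = {n : ℕ+ | AA (k + (n : ℕ)) ∈ p} := by
      ext n; rw [Set.mem_setOf_eq, Set.mem_setOf_eq, hAAshift k n]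
    have hidem := hp (AA k)
    rw [hsetEq] at hidem
    by_cases h : AA k ∈ p
    · refine Filter.mem_of_superset (hidem.mpr h) ?_
      intro n hn
      have hn' : AA (k + (n:ℕ)) ∈ p := hn
      simp [hypt, hn', h]
    · have hc : {n : ℕ+ | AA (k + (n : ℕ)) ∈ p}ᶜ ∈ p :=
        Ultrafilter.compl_mem_iff_notMem.mpr (fun hcon => h (hidem.mp hcon))
      refine Filter.mem_of_superset hc ?_
      intro n hn
      have hn' : ¬ AA (k + (n:ℕ)) ∈ p := hn
      simp [hypt, hn', h]
  have key3 : ∀ m0 : ℕ+, {n : ℕ+ | m0 ≤ n} ∈ p := by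
    intro m0
    by_contra hcon
    have hc : {n : ℕ+ | m0 ≤ n}ᶜ ∈ p := Ultrafilter.compl_mem_iff_notMem.mpr hcon
    have hfin : ({n : ℕ+ | m0 ≤ n}ᶜ : Set ℕ+).Finite := by
      refine Set.Finite.subset (Set.Finite.preimage
        (Set.injOn_of_injective PNat.coe_injective) (Set.finite_Iio (m0 : ℕ))) ?_
      intro n hn
      simp only [Set.mem_compl_iff, Set.mem_setOf_eq, not_le] at hn
      exact (PNat.coe_lt_coe n m0).mpr hn
    obtain ⟨j, -, hj⟩ := Ultrafilter.eq_pure_of_finite_mem hfin hc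
    have hone : ({j} : Set ℕ+) ∈ p := by rw [hj]; exact Ultrafilter.mem_pure.mpr rfl
    have h2 := (hp {j}).mpr hone
    rw [hj] at h2
    have h3 : {m : ℕ+ | j + m ∈ ({j} : Set ℕ+)} ∈ (pure j : Ultrafilter ℕ+) :=
      Ultrafilter.mem_pure.mp h2
    have h4 : j + j ∈ ({j} : Set ℕ+) := Ultrafilter.mem_pure.mp h3
    have h5 : j + j = j := h4
    have h6 := congrArg (fun q : ℕ+ => (q : ℕ)) h5
    simp only [PNat.add_coe] at h6
    have := j.pos
    omega
  refine ⟨ℕ → Bool, inferInstance, T, xpt, ypt, {z : ℕ → Bool | z 0 = true},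
    inferInstance, inferInstance, inferInstance,
    continuous_pi fun k => continuous_apply (k + 1), ?_, ?_, ?_, ?_, ?_⟩
  · -- (i)
    intro V hV hyV
    obtain ⟨I, uu, hIu, hsub⟩ := isOpen_pi_iff.mp hV ypt hyV
    have hmem : (⋂ k ∈ I, {n : ℕ+ | ypt (k + (n : ℕ)) = ypt k}) ∈ p :=
      (Filter.biInter_finset_mem I).mpr (fun k _ => key2 k)
    refine hJ _ (Filter.mem_of_superset hmem ?_)
    intro n hn
    simp only [Set.mem_iInter] at hn
    refine hsub ?_
    rw [Set.mem_pi]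
    intro k hk
    rw [hiter, hn k hk]
    exact (hIu k hk).2
  · -- (ii)
    intro W hW hyyW m0
    obtain ⟨V1, V2, hV1, hV2, hy1, hy2, hVW⟩ := isOpen_prod_iff.mp hW ypt ypt hyyW
    obtain ⟨I1, u1, hI1, hsub1⟩ := isOpen_pi_iff.mp hV1 ypt hy1
    obtain ⟨I2, u2, hI2, hsub2⟩ := isOpen_pi_iff.mp hV2 ypt hy2
    have hm1 : (⋂ k ∈ I1, {n : ℕ+ | xpt (k + (n : ℕ)) = ypt k}) ∈ p :=
      (Filter.biInter_finset_mem I1).mpr (fun k _ => key1 k)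
    have hm2 : (⋂ k ∈ I2, {n : ℕ+ | ypt (k + (n : ℕ)) = ypt k}) ∈ p :=
      (Filter.biInter_finset_mem I2).mpr (fun k _ => key2 k)
    have hm3 := key3 m0
    have hall := Filter.inter_mem (Filter.inter_mem hm1 hm2) hm3
    obtain ⟨n, hn⟩ := Filter.nonempty_of_mem hall
    obtain ⟨⟨hn1, hn2⟩, hn3⟩ := hn
    refine ⟨n, hn3, hVW ?_⟩
    simp only [Set.mem_iInter] at hn1 hn2
    refine Set.mem_prod.mpr ⟨hsub1 ?_, hsub2 ?_⟩
    · rw [Set.mem_pi]; intro k hk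
      show T^[(n:ℕ)] xpt k ∈ u1 k
      rw [hiter, hn1 k hk]; exact (hI1 k hk).2
    · rw [Set.mem_pi]; intro k hk
      show T^[(n:ℕ)] ypt k ∈ u2 k
      rw [hiter, hn2 k hk]; exact (hI2 k hk).2
  · -- U open
    have : IsOpen ((fun z : ℕ → Bool => z 0) ⁻¹' ({true} : Set Bool)) :=
      (continuous_apply 0).isOpen_preimage _ (isOpen_discrete _)
    exact this
  · -- y ∈ U
    show ypt 0 = true
    simp only [hypt, hA0]
    exact decide_eq_true hF
  · -- F = N(x, U)
    ext n
    simp only [Set.mem_setOf_eq]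
    have : T^[(n:ℕ)] xpt 0 = xpt (0 + (n:ℕ)) := hiter _ _ _
    rw [show ∀ (a : ℕ+) (s : Set ℕ+), (a ∈ s ↔ s a) from fun _ _ => Iff.rfl]
    show n ∈ F ↔ T^[(n:ℕ)] xpt 0 = true
    rw [this, Nat.zero_add]
    simp only [hxpt, decide_eq_true_eq, hGn]
    constructor
    · intro hn; exact ⟨n, hn, rfl⟩
    · rintro ⟨i, hi, hin⟩; rwa [PNat.coe_injective hin] at hi

theorem cset_reverse (F : Set ℕ+)
    (h : ∃ (X : Type) (_ : TopologicalSpace X) (T : X → X) (x y : X) (U : Set X),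
        Nonempty X ∧ CompactSpace X ∧ T2Space X ∧ Continuous T ∧
        (∀ V : Set X, IsOpen V → y ∈ V → IsJSet {n : ℕ+ | T^[(n : ℕ)] y ∈ V}) ∧
        (∀ W : Set (X × X), IsOpen W → (y, y) ∈ W →
          ∀ m : ℕ+, ∃ n : ℕ+, m ≤ n ∧ (T^[(n : ℕ)] x, T^[(n : ℕ)] y) ∈ W) ∧
        IsOpen U ∧ y ∈ U ∧ F = {n : ℕ+ | T^[(n : ℕ)] x ∈ U}) : IsCSet F := by
  classical
  obtain ⟨X, topX, T, x, y, U, hXne, hXcomp, hXt2, hTc, hi, hii, hUo, hyU, hFeq⟩ := h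
  letI := topX
  haveI := hXne
  haveI := hXcomp
  haveI := hXt2
  set g0 : Set (Set ℕ+) :=
    {S | ∃ V : Set X, IsOpen V ∧ y ∈ V ∧ S = {n : ℕ+ | T^[(n : ℕ)] y ∈ V}} with hg0def
  have hbase0 : ∀ t : Finset (Set ℕ+), ↑t ⊆ g0 →
      ∃ V : Set X, IsOpen V ∧ y ∈ V ∧ {n : ℕ+ | T^[(n : ℕ)] y ∈ V} ⊆ ⋂₀ ↑t := by
    intro t
    induction t using Finset.induction_on with
    | empty => intro _; exact ⟨Set.univ, isOpen_univ, trivial, by simp⟩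
    | @insert S t hSt ih =>
        intro hsub
        obtain ⟨V1, hV1, hyV1, hS⟩ := hsub (Finset.mem_coe.mpr (Finset.mem_insert_self S t))
        obtain ⟨V2, hV2, hyV2, hsub2⟩ :=
          ih (fun A hA => hsub (Finset.mem_coe.mpr
            (Finset.mem_insert_of_mem (Finset.mem_coe.mp hA))))
        refine ⟨V1 ∩ V2, hV1.inter hV2, ⟨hyV1, hyV2⟩, ?_⟩
        intro n hn
        rw [Finset.coe_insert, Set.sInter_insert]
        exact ⟨by rw [hS]; exact hn.1, hsub2 hn.2⟩
  have hg0 : ∀ t : Finset (Set ℕ+), ↑t ⊆ g0 → IsJSet (⋂₀ ↑t) := by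
    intro t ht
    obtain ⟨V, hV, hyV, hsubV⟩ := hbase0 t ht
    exact isJSet_mono (hi V hV hyV) hsubV
  obtain ⟨q0, hq0J, hq0mem⟩ := exists_jset_ultrafilter hg0
  have hq0y : ∀ V : Set X, IsOpen V → y ∈ V → {n : ℕ+ | T^[(n : ℕ)] y ∈ V} ∈ q0 :=
    fun V hV hyV => hq0mem _ ⟨V, hV, hyV, rfl⟩
  have hq0lim : ulim q0 (fun n : ℕ+ => T^[(n : ℕ)] y) = y :=
    ulim_eq (tendsto_nhds.mpr (fun V hV hyV => hq0y V hV hyV))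
  -- the ultrafilter q1 witnessing the ω-limit condition
  set g1 : Set (Set ℕ+) := {S | ∃ (W : Set (X × X)) (m : ℕ+), IsOpen W ∧ (y, y) ∈ W ∧
    S = {n : ℕ+ | m ≤ n ∧ (T^[(n : ℕ)] x, T^[(n : ℕ)] y) ∈ W}} with hg1def
  have hbase1 : ∀ t : Finset (Set ℕ+), ↑t ⊆ g1 →
      ∃ (W : Set (X × X)) (m : ℕ+), IsOpen W ∧ (y, y) ∈ W ∧
        {n : ℕ+ | m ≤ n ∧ (T^[(n : ℕ)] x, T^[(n : ℕ)] y) ∈ W} ⊆ ⋂₀ ↑t := by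
    intro t
    induction t using Finset.induction_on with
    | empty => intro _; exact ⟨Set.univ, 1, isOpen_univ, trivial, by simp⟩
    | @insert S t hSt ih =>
        intro hsub
        obtain ⟨W1, m1, hW1, hyy1, hS⟩ := hsub (Finset.mem_coe.mpr (Finset.mem_insert_self S t))
        obtain ⟨W2, m2, hW2, hyy2, hsub2⟩ :=
          ih (fun A hA => hsub (Finset.mem_coe.mpr
            (Finset.mem_insert_of_mem (Finset.mem_coe.mp hA))))
        refine ⟨W1 ∩ W2, max m1 m2, hW1.inter hW2, ⟨hyy1, hyy2⟩, ?_⟩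
        intro n hn
        rw [Finset.coe_insert, Set.sInter_insert]
        refine ⟨by rw [hS]; exact ⟨le_trans (le_max_left _ _) hn.1, hn.2.1⟩,
          hsub2 ⟨le_trans (le_max_right _ _) hn.1, hn.2.2⟩⟩
  have hne1 : (Filter.generate g1).NeBot := by
    rw [Filter.generate_neBot_iff]
    intro t hts htf
    lift t to Finset (Set ℕ+) using htf
    obtain ⟨W, m, hW, hyy, hsubW⟩ := hbase1 t hts
    obtain ⟨n, hn1, hn2⟩ := hii W hW hyy m
    exact ⟨n, hsubW ⟨hn1, hn2⟩⟩
  obtain ⟨q1, hq1le⟩ := Filter.exists_ultrafilter_le (Filter.generate g1)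
  have hq1x : ulim q1 (fun n : ℕ+ => T^[(n : ℕ)] x) = y := by
    refine ulim_eq (tendsto_nhds.mpr ?_)
    intro V hV hyV
    have hWmem : {n : ℕ+ | 1 ≤ n ∧ (T^[(n : ℕ)] x, T^[(n : ℕ)] y) ∈ V ×ˢ (Set.univ : Set X)}
        ∈ q1 := hq1le (Filter.mem_generate_of_mem
          ⟨V ×ˢ (Set.univ : Set X), 1, hV.prod isOpen_univ, ⟨hyV, trivial⟩, rfl⟩)
    exact Filter.mem_of_superset hWmem (fun n hn => hn.2.1)
  have hq1y : ulim q1 (fun n : ℕ+ => T^[(n : ℕ)] y) = y := by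
    refine ulim_eq (tendsto_nhds.mpr ?_)
    intro V hV hyV
    have hWmem : {n : ℕ+ | 1 ≤ n ∧ (T^[(n : ℕ)] x, T^[(n : ℕ)] y) ∈ (Set.univ : Set X) ×ˢ V}
        ∈ q1 := hq1le (Filter.mem_generate_of_mem
          ⟨(Set.univ : Set X) ×ˢ V, 1, isOpen_univ.prod hV, ⟨trivial, hyV⟩, rfl⟩)
    exact Filter.mem_of_superset hWmem (fun n hn => hn.2.2)
  -- the compact subsemigroup
  set SS : Set (Ultrafilter ℕ+) := {u | (∀ A ∈ u, IsJSet A) ∧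
    ulim u (fun n : ℕ+ => T^[(n : ℕ)] x) = y ∧ ulim u (fun n : ℕ+ => T^[(n : ℕ)] y) = y}
    with hSSdef
  have hc1 : IsClosed {u : Ultrafilter ℕ+ | ∀ A ∈ u, IsJSet A} := by
    have hrw : {u : Ultrafilter ℕ+ | ∀ A ∈ u, IsJSet A}
        = ⋂ A ∈ {A : Set ℕ+ | ¬ IsJSet A}, {u : Ultrafilter ℕ+ | A ∈ u}ᶜ := by
      ext u
      simp only [Set.mem_iInter, Set.mem_setOf_eq, Set.mem_compl_iff]
      constructor
      · intro hu A hA hAu; exact hA (hu A hAu)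
      · intro hu A hAu; by_contra hA; exact hu A hA hAu
    rw [hrw]
    exact isClosed_biInter (fun A _ => (ultrafilter_isOpen_basic A).isClosed_compl)
  have hlimset : ∀ g : ℕ+ → X, {u : Ultrafilter ℕ+ | ulim u g = y}
      = ⋂ V ∈ {V : Set X | IsOpen V ∧ y ∈ V}, {u : Ultrafilter ℕ+ | {n : ℕ+ | g n ∈ V} ∈ u} := by
    intro g; ext u
    simp only [Set.mem_iInter, Set.mem_setOf_eq]
    constructor
    · rintro hl V ⟨hV, hyV⟩
      exact mem_ulim hV (by rw [hl]; exact hyV)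
    · intro hmem
      exact ulim_eq (tendsto_nhds.mpr (fun V hV hyV => hmem V ⟨hV, hyV⟩))
  have hc2 : IsClosed {u : Ultrafilter ℕ+ | ulim u (fun n : ℕ+ => T^[(n : ℕ)] x) = y} := by
    rw [hlimset]; exact isClosed_biInter (fun V _ => ultrafilter_isClosed_basic _)
  have hc3 : IsClosed {u : Ultrafilter ℕ+ | ulim u (fun n : ℕ+ => T^[(n : ℕ)] y) = y} := by
    rw [hlimset]; exact isClosed_biInter (fun V _ => ultrafilter_isClosed_basic _)
  have hSc : IsClosed SS := by
    have hrw : SS = ({u : Ultrafilter ℕ+ | ∀ A ∈ u, IsJSet A}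
        ∩ {u : Ultrafilter ℕ+ | ulim u (fun n : ℕ+ => T^[(n : ℕ)] x) = y})
        ∩ {u : Ultrafilter ℕ+ | ulim u (fun n : ℕ+ => T^[(n : ℕ)] y) = y} := by
      ext u
      simp only [hSSdef, Set.mem_setOf_eq, Set.mem_inter_iff]
      tauto
    rw [hrw]
    exact (hc1.inter hc2).inter hc3
  have hSne : SS.Nonempty := by
    refine ⟨q0 + q1, jset_uf_add hq0J, ?_, ?_⟩
    · rw [ulim_add T hTc q0 q1 x, hq1x, hq0lim]
    · rw [ulim_add T hTc q0 q1 y, hq1y, hq0lim]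
  have hSadd : ∀ u ∈ SS, ∀ v ∈ SS, u + v ∈ SS := by
    rintro u ⟨huJ, hux, huy⟩ v ⟨hvJ, hvx, hvy⟩
    refine ⟨jset_uf_add huJ, ?_, ?_⟩
    · rw [ulim_add T hTc u v x, hvx, huy]
    · rw [ulim_add T hTc u v y, hvy, huy]
  obtain ⟨phat, hphatS, hidem⟩ := exists_idempotent_in_compact_add_subsemigroup
    (fun r => Ultrafilter.continuous_add_left r) SS hSne hSc.isCompact hSadd
  obtain ⟨hpJ, hpx, hpy⟩ := hphatS
  refine ⟨phat, ?_, hpJ, ?_⟩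
  · intro A
    constructor
    · intro hmem
      have hA : A ∈ phat + phat := (Ultrafilter.eventually_add phat phat (· ∈ A)).mpr hmem
      rwa [hidem] at hA
    · intro hmem
      have hA : A ∈ phat + phat := by rw [hidem]; exact hmem
      exact (Ultrafilter.eventually_add phat phat (· ∈ A)).mp hA
  · rw [hFeq]
    exact mem_ulim hUo (by rw [hpx]; exact hyU)


/-- Dynamical characterization of C-sets: `F ⊆ ℕ₊` is a C-set iff there are a dynamical
system `(X, T)`, points `x, y ∈ X` such that `N(y, V)` is a J-set for every open
neighborhood `V` of `y` and `(y, y)` lies in the ω-limit set of `(x, y)` under `T × T`,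
and an open neighborhood `U` of `y` with `F = N(x, U)`. -/
theorem cset_dynamical_characterization (F : Set ℕ+) :
    IsCSet F ↔
      ∃ (X : Type) (_ : TopologicalSpace X) (T : X → X) (x y : X) (U : Set X),
        Nonempty X ∧ CompactSpace X ∧ T2Space X ∧ Continuous T ∧
        (∀ V : Set X, IsOpen V → y ∈ V → IsJSet {n : ℕ+ | T^[(n : ℕ)] y ∈ V}) ∧
        (∀ W : Set (X × X), IsOpen W → (y, y) ∈ W →
          ∀ m : ℕ+, ∃ n : ℕ+, m ≤ n ∧ (T^[(n : ℕ)] x, T^[(n : ℕ)] y) ∈ W) ∧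
        IsOpen U ∧ y ∈ U ∧ F = {n : ℕ+ | T^[(n : ℕ)] x ∈ U} := by
  exact ⟨cset_forward F, cset_reverse F⟩
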